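/- Let s ≥ 9 be an integer and let r be the unique integer in {−2,−1,0,1,2} with s ≡ r (mod 5). If r ∈ {−1,0,1,2}, then 41·2^{s−4} < P(2^s) − P(2^{s−1}) < 21·2^{s−3} − 2^{1+r} ≤ 21·2^{s−3} − 1 < 6·2^{s−1}. If r = −2, then 41·2^{s−4} < P(2^s) − P(2^{s−1}) < 21·2^{s−3} − 16. -/

import Mathlib

/-- `Pfun m = 5m + ∑_{i=0}^{∞} ⌊m/(8·32^i)⌋`; the sum is finite because every
term with `8·32^i > m` equals `0`. This is the width `P_𝒥(K,J)` of the Q-effective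
implementation of the Jacobi algorithm on a `K×J` grid, with `m = KJ`. -/
noncomputable def Pfun (m : ℕ) : ℕ := 5 * m + ∑' i : ℕ, m / (8 * 32 ^ i)

lemma tsum_div_eq (m n : ℕ) (h : m ≤ n) :
    ∑' i : ℕ, m / (8 * 32 ^ i) = ∑ i ∈ Finset.range n, m / (8 * 32 ^ i) := by
  apply tsum_eq_sum
  intro i hi
  simp only [Finset.mem_range, not_lt] at hi
  apply Nat.div_eq_of_lt
  calc m ≤ n := h
    _ ≤ i := hi
    _ < 32 ^ i := Nat.lt_pow_self (n := i) (by norm_num)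
    _ ≤ 8 * 32 ^ i := Nat.le_mul_of_pos_left _ (by norm_num)

lemma geo (n x : ℕ) : ∑ i ∈ Finset.range n, x / 32 ^ i ≤ x + x / 16 := by
  induction n generalizing x with
  | zero => simp
  | succ n ih =>
    rw [Finset.sum_range_succ']
    have h1 : ∀ i, x / 32 ^ (i + 1) = (x / 32) / 32 ^ i := by
      intro i
      rw [Nat.div_div_eq_div_mul, pow_succ']
    simp only [h1, pow_zero, Nat.div_one]
    have h2 := ih (x / 32)
    have h3 : x / 32 / 16 = x / 512 := by rw [Nat.div_div_eq_div_mul]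
    have h4 : x / 32 + x / 512 ≤ x / 16 := by omega
    omega

/-- Let `s ≥ 9` and let `r` be the unique integer in `{−2,−1,0,1,2}` with
`s ≡ r (mod 5)`. If `r ∈ {−1,0,1,2}`, then
`41·2^{s−4} < P(2^s) − P(2^{s−1}) < 21·2^{s−3} − 2^{1+r} ≤ 21·2^{s−3} − 1 < 6·2^{s−1}`.
If `r = −2`, then `41·2^{s−4} < P(2^s) − P(2^{s−1}) < 21·2^{s−3} − 16`. -/
theorem stmt_16 (s : ℕ) (hs : 9 ≤ s) (r : ℤ) (hr1 : -2 ≤ r) (hr2 : r ≤ 2)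
    (hmod : (s : ℤ) ≡ r [ZMOD 5]) :
    (-1 ≤ r →
      (41 * 2 ^ (s - 4) : ℤ) < (Pfun (2 ^ s) : ℤ) - Pfun (2 ^ (s - 1)) ∧
      (Pfun (2 ^ s) : ℤ) - Pfun (2 ^ (s - 1)) < 21 * 2 ^ (s - 3) - 2 ^ (1 + r).toNat ∧
      (21 * 2 ^ (s - 3) - 2 ^ (1 + r).toNat : ℤ) ≤ 21 * 2 ^ (s - 3) - 1 ∧
      (21 * 2 ^ (s - 3) - 1 : ℤ) < 6 * 2 ^ (s - 1)) ∧
    (r = -2 →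
      (41 * 2 ^ (s - 4) : ℤ) < (Pfun (2 ^ s) : ℤ) - Pfun (2 ^ (s - 1)) ∧
      (Pfun (2 ^ s) : ℤ) - Pfun (2 ^ (s - 1)) < 21 * 2 ^ (s - 3) - 16) := by
  obtain ⟨t, rfl⟩ : ∃ t, s = 9 + t := ⟨s - 9, by omega⟩
  have h1 : 9 + t - 1 = 8 + t := by omega
  have h3 : 9 + t - 3 = 6 + t := by omega
  have h4 : 9 + t - 4 = 5 + t := by omega
  rw [h1, h3, h4]
  have hn2 : 2 ≤ 2 ^ (9 + t) := by
    calc (2:ℕ) ≤ 2 ^ 9 := by norm_num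
    _ ≤ 2 ^ (9 + t) := Nat.pow_le_pow_right (by norm_num) (by omega)
  -- rewrite Pfun values as finite sums
  have hA : Pfun (2 ^ (9 + t)) =
      5 * 2 ^ (9 + t) + ∑ i ∈ Finset.range (2 ^ (9 + t)), 2 ^ (6 + t) / 32 ^ i := by
    rw [Pfun, tsum_div_eq _ (2 ^ (9 + t)) le_rfl]
    congr 1
    refine Finset.sum_congr rfl fun i _ => ?_
    rw [show (2:ℕ) ^ (9 + t) = 8 * 2 ^ (6 + t) by ring,
      Nat.mul_div_mul_left _ _ (by norm_num)]
  have hB : Pfun (2 ^ (8 + t)) =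
      5 * 2 ^ (8 + t) + ∑ i ∈ Finset.range (2 ^ (9 + t)), 2 ^ (5 + t) / 32 ^ i := by
    rw [Pfun, tsum_div_eq _ (2 ^ (9 + t)) (Nat.pow_le_pow_right (by norm_num) (by omega))]
    congr 1
    refine Finset.sum_congr rfl fun i _ => ?_
    rw [show (2:ℕ) ^ (8 + t) = 8 * 2 ^ (5 + t) by ring,
      Nat.mul_div_mul_left _ _ (by norm_num)]
  set A : ℕ := ∑ i ∈ Finset.range (2 ^ (9 + t)), 2 ^ (6 + t) / 32 ^ i with hAdef
  set B : ℕ := ∑ i ∈ Finset.range (2 ^ (9 + t)), 2 ^ (5 + t) / 32 ^ i with hBdef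
  have hab : ∀ i : ℕ, (2:ℕ) ^ (5 + t) / 32 ^ i ≤ 2 ^ (6 + t) / 32 ^ i :=
    fun i => Nat.div_le_div_right (Nat.pow_le_pow_right (by norm_num) (by omega))
  -- split A = B + sum of differences
  have hsplit : A = B + ∑ i ∈ Finset.range (2 ^ (9 + t)),
      (2 ^ (6 + t) / 32 ^ i - 2 ^ (5 + t) / 32 ^ i) := by
    rw [hAdef, hBdef, ← Finset.sum_add_distrib]
    refine Finset.sum_congr rfl fun i _ => ?_
    have := hab i
    omega
  -- lower bound on the sum of differences
  have hsub : ({0, 1} : Finset ℕ) ⊆ Finset.range (2 ^ (9 + t)) := by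
    intro x hx
    simp only [Finset.mem_insert, Finset.mem_singleton] at hx
    simp only [Finset.mem_range]
    omega
  have hmono : ∑ i ∈ ({0, 1} : Finset ℕ), (2 ^ (6 + t) / 32 ^ i - 2 ^ (5 + t) / 32 ^ i)
      ≤ ∑ i ∈ Finset.range (2 ^ (9 + t)), (2 ^ (6 + t) / 32 ^ i - 2 ^ (5 + t) / 32 ^ i) :=
    Finset.sum_le_sum_of_subset hsub
  have hd01 : ∑ i ∈ ({0, 1} : Finset ℕ),
      (2 ^ (6 + t) / 32 ^ i - 2 ^ (5 + t) / 32 ^ i) = 2 ^ (5 + t) + 2 ^ t := by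
    rw [Finset.sum_pair (by norm_num)]
    have e0 : (2:ℕ) ^ (6 + t) / 32 ^ 0 - 2 ^ (5 + t) / 32 ^ 0 = 2 ^ (5 + t) := by
      simp only [pow_zero, Nat.div_one]
      have : (2:ℕ) ^ (6 + t) = 2 * 2 ^ (5 + t) := by ring
      omega
    have e1 : (2:ℕ) ^ (6 + t) / 32 ^ 1 - 2 ^ (5 + t) / 32 ^ 1 = 2 ^ t := by
      have q1 : (2:ℕ) ^ (6 + t) / 32 ^ 1 = 2 * 2 ^ t := by
        rw [show (2:ℕ) ^ (6 + t) = 32 ^ 1 * (2 * 2 ^ t) by ring,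
          Nat.mul_div_cancel_left _ (by norm_num)]
      have q2 : (2:ℕ) ^ (5 + t) / 32 ^ 1 = 2 ^ t := by
        rw [show (2:ℕ) ^ (5 + t) = 32 ^ 1 * 2 ^ t by ring,
          Nat.mul_div_cancel_left _ (by norm_num)]
      rw [q1, q2]
      omega
    rw [e0, e1]
  rw [hd01] at hmono
  have hL : B + 2 ^ (5 + t) + 2 ^ t ≤ A := by omega
  -- upper bound : A ≤ B + 2^(5+t) + 2^(2+t)
  have hU : A ≤ B + 2 ^ (5 + t) + 2 ^ (2 + t) := by
    have g : A ≤ 2 ^ (6 + t) + 2 ^ (2 + t) := by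
      have hg := geo (2 ^ (9 + t)) (2 ^ (6 + t))
      have e : (2:ℕ) ^ (6 + t) / 16 = 2 ^ (2 + t) := by
        rw [show (2:ℕ) ^ (6 + t) = 16 * 2 ^ (2 + t) by ring,
          Nat.mul_div_cancel_left _ (by norm_num)]
      rw [e] at hg
      exact hg
    have b0 : 2 ^ (5 + t) ≤ B := by
      have hb := Finset.single_le_sum (f := fun i => 2 ^ (5 + t) / 32 ^ i)
        (fun i _ => Nat.zero_le _) (Finset.mem_range.2 (by omega : 0 < 2 ^ (9 + t)))
      simpa using hb
    have e6 : (2:ℕ) ^ (6 + t) = 2 * 2 ^ (5 + t) := by ring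
    omega
  rw [hA, hB]
  -- cast facts to ℤ
  have hLz : (B : ℤ) + 2 ^ (5 + t) + 2 ^ t ≤ A := by exact_mod_cast hL
  have hUz : (A : ℤ) ≤ B + 2 ^ (5 + t) + 2 ^ (2 + t) := by exact_mod_cast hU
  have p9 : (2 : ℤ) ^ (9 + t) = 16 * 2 ^ (5 + t) := by ring
  have p8 : (2 : ℤ) ^ (8 + t) = 8 * 2 ^ (5 + t) := by ring
  have p6 : (2 : ℤ) ^ (6 + t) = 2 * 2 ^ (5 + t) := by ring
  have p52 : (2 : ℤ) ^ (5 + t) = 8 * 2 ^ (2 + t) := by ring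
  have p20 : (2 : ℤ) ^ (2 + t) = 4 * 2 ^ t := by ring
  have p0 : (1 : ℤ) ≤ 2 ^ t := by
    have : (0 : ℤ) < 2 ^ t := by positivity
    omega
  push_cast
  constructor
  · intro hr
    have hk : (1 + r).toNat ≤ 3 := by omega
    have hE1 : (1 : ℤ) ≤ 2 ^ (1 + r).toNat := by
      have : (0 : ℤ) < 2 ^ (1 + r).toNat := by positivity
      omega
    have hE8 : (2 : ℤ) ^ (1 + r).toNat ≤ 8 := by
      calc (2:ℤ) ^ (1 + r).toNat ≤ 2 ^ 3 := pow_le_pow_right₀ (by norm_num) hk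
      _ = 8 := by norm_num
    refine ⟨by linarith, by linarith, by linarith, by linarith⟩
  · intro hr
    exact ⟨by linarith, by linarith⟩
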